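/- Deterministic primal–dual distance bound. Consider min_{y,z} f(y) + g(z) subject to H_y y + H_z z = d, where f : ℝ^n → ℝ is continuous and strongly convex with parameter σ_f > 0, g : ℝ^{n_z} → ℝ is convex and continuous, H_y ∈ ℝ^{p×n}, H_z ∈ ℝ^{p×n_z}, d ∈ ℝ^p. Let (y*, z*) be an optimal solution, let D(μ) = −f⋆(H_yᵀμ) − g⋆(H_zᵀμ) + ⟨d, μ⟩ be the dual function, let μ* maximize D, and assume strong duality D(μ*) = f(y*) + g(z*). For μ ∈ ℝ^p let ŷ(μ) be the unique minimizer of y ↦ f(y) − ⟨μ, H_y y⟩. Then for every μ ∈ ℝ^p with D(μ) > −∞, ‖ŷ(μ) − y*‖² ≤ (2/σ_f) (D(μ*) − D(μ)). -/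

import Mathlib

open scoped RealInnerProductSpace
open Matrix

/-- The Fenchel conjugate `g⋆(y) = sup_x (⟨y,x⟩ − g(x))`, with values in `ℝ ∪ {+∞}`. -/
noncomputable def fconj {q : ℕ} (g : EuclideanSpace ℝ (Fin q) → ℝ)
    (y : EuclideanSpace ℝ (Fin q)) : EReal :=
  ⨆ x, ((⟪y, x⟫ - g x : ℝ) : EReal)

/-- The Fenchel conjugate as a real-valued function (valid whenever the supremum is
finite, which holds for continuous strongly convex `f`). -/
noncomputable def realConj {q : ℕ} (f : EuclideanSpace ℝ (Fin q) → ℝ)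
    (y : EuclideanSpace ℝ (Fin q)) : ℝ :=
  ⨆ x, (⟪y, x⟫ - f x)

/-- `h` is strongly convex with parameter `σ`. -/
def StronglyConvexWith {E : Type*} [NormedAddCommGroup E] [NormedSpace ℝ E]
    (σ : ℝ) (h : E → ℝ) : Prop :=
  ∀ x y : E, ∀ l : ℝ, 0 ≤ l → l ≤ 1 →
    h (l • x + (1 - l) • y) ≤ l * h x + (1 - l) * h y - σ / 2 * (l * (1 - l) * ‖x - y‖ ^ 2)

lemma sc_min_bound {E : Type*} [NormedAddCommGroup E] [NormedSpace ℝ E] {σ : ℝ}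
    (hσ : 0 < σ) {φ : E → ℝ} (h : StronglyConvexWith σ φ) {m : E}
    (hm : ∀ y, φ m ≤ φ y) (y : E) :
    σ / 2 * ‖m - y‖ ^ 2 ≤ φ y - φ m := by
  set C := ‖m - y‖ ^ 2 with hC
  have hC0 : 0 ≤ C := by positivity
  have key : ∀ l : ℝ, 0 < l → l ≤ 1 → σ / 2 * ((1 - l) * C) ≤ φ y - φ m := by
    intro l hl hl1
    have h1 := h y m l hl.le hl1
    have h2 := hm (l • y + (1 - l) • m)
    have hnorm : ‖y - m‖ = ‖m - y‖ := by rw [norm_sub_rev]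
    rw [hnorm] at h1
    have e : σ / 2 * (l * (1 - l) * ‖m - y‖ ^ 2) = l * (σ / 2 * ((1 - l) * C)) := by
      rw [hC]; ring
    rw [e] at h1
    have h3 : l * (σ / 2 * ((1 - l) * C)) ≤ l * (φ y - φ m) := by linarith
    exact le_of_mul_le_mul_left h3 hl
  apply le_of_forall_pos_le_add
  intro ε hε
  set c := σ / 2 * C with hc
  have hc0 : 0 ≤ c := by positivity
  set l : ℝ := min 1 (ε / (c + 1)) with hl
  have hlpos : 0 < l := lt_min one_pos (by positivity)
  have hl1 : l ≤ 1 := min_le_left _ _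
  have hk := key l hlpos hl1
  have hlc : l * c ≤ ε := by
    have h1 : l ≤ ε / (c + 1) := min_le_right _ _
    have h2 : l * c ≤ (ε / (c + 1)) * c := by nlinarith
    have h3 : (ε / (c + 1)) * c ≤ ε := by
      rw [div_mul_eq_mul_div, div_le_iff₀ (by linarith)]
      nlinarith
    linarith
  nlinarith

lemma inner_transpose_mulVec {p n : ℕ} (A : Matrix (Fin p) (Fin n) ℝ)
    (μ : EuclideanSpace ℝ (Fin p)) (y : EuclideanSpace ℝ (Fin n))
    (x : EuclideanSpace ℝ (Fin n)) (hx : x = WithLp.toLp 2 (Aᵀ.mulVec μ)) :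
    (⟪x, y⟫ : ℝ) = ⟪μ, (WithLp.toLp 2 (A.mulVec y) : EuclideanSpace ℝ (Fin p))⟫ := by
  subst hx
  simp only [PiLp.inner_apply, RCLike.inner_apply, conj_trivial, Matrix.mulVec,
    dotProduct, Matrix.transpose_apply, Finset.sum_mul, Finset.mul_sum]
  rw [Finset.sum_comm]
  apply Finset.sum_congr rfl; intros; apply Finset.sum_congr rfl; intros; ring

lemma inner_mulVec_combo {p n : ℕ} (A : Matrix (Fin p) (Fin n) ℝ)
    (μ : EuclideanSpace ℝ (Fin p)) (x y : EuclideanSpace ℝ (Fin n)) (l : ℝ) :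
    (⟪μ, (WithLp.toLp 2 (A.mulVec ((l • x + (1 - l) • y : EuclideanSpace ℝ (Fin n)))) : EuclideanSpace ℝ (Fin p))⟫ : ℝ)
      = l * ⟪μ, (WithLp.toLp 2 (A.mulVec x) : EuclideanSpace ℝ (Fin p))⟫
        + (1 - l) * ⟪μ, (WithLp.toLp 2 (A.mulVec y) : EuclideanSpace ℝ (Fin p))⟫ := by
  simp only [PiLp.inner_apply, RCLike.inner_apply, conj_trivial, Matrix.mulVec,
    dotProduct, WithLp.ofLp_add, WithLp.ofLp_smul, Pi.add_apply, Pi.smul_apply, smul_eq_mul,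
    Finset.mul_sum, Finset.sum_mul, mul_add]
  rw [← Finset.sum_add_distrib]
  apply Finset.sum_congr rfl; intros
  rw [← Finset.sum_add_distrib]
  apply Finset.sum_congr rfl; intros; ring

/-- Deterministic primal–dual distance bound: for every dual point `μ`
with `D(μ) > −∞`, the primal point `ŷ(μ)` satisfies
`‖ŷ(μ) − y*‖² ≤ (2/σ_f)(D(μ*) − D(μ))`. -/
theorem primal_dual_distance_bound
    {n nz p : ℕ} (f : EuclideanSpace ℝ (Fin n) → ℝ) (σf : ℝ) (hσ : 0 < σf)
    (hf_cont : Continuous f) (hf_sc : StronglyConvexWith σf f)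
    (g : EuclideanSpace ℝ (Fin nz) → ℝ) (hg : ConvexOn ℝ Set.univ g) (hg_cont : Continuous g)
    (Hy : Matrix (Fin p) (Fin n) ℝ) (Hz : Matrix (Fin p) (Fin nz) ℝ)
    (d : EuclideanSpace ℝ (Fin p))
    (ystar : EuclideanSpace ℝ (Fin n)) (zstar : EuclideanSpace ℝ (Fin nz))
    (hfeas : Hy.mulVec ystar + Hz.mulVec zstar = d)
    (hopt : ∀ (y : EuclideanSpace ℝ (Fin n)) (z : EuclideanSpace ℝ (Fin nz)),
      Hy.mulVec y + Hz.mulVec z = d → f ystar + g zstar ≤ f y + g z)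
    (D : EuclideanSpace ℝ (Fin p) → EReal)
    (hD : ∀ μ, D μ = - ((realConj f (WithLp.toLp 2 (Hyᵀ.mulVec μ)) : ℝ) : EReal) - fconj g (WithLp.toLp 2 (Hzᵀ.mulVec μ))
      + ((⟪d, μ⟫ : ℝ) : EReal))
    (μstar : EuclideanSpace ℝ (Fin p)) (hmax : ∀ μ, D μ ≤ D μstar)
    (hsd : D μstar = ((f ystar + g zstar : ℝ) : EReal))
    (yhat : EuclideanSpace ℝ (Fin p) → EuclideanSpace ℝ (Fin n))
    (hyhat_min : ∀ μ y, f (yhat μ) - ⟪μ, (WithLp.toLp 2 (Hy.mulVec (yhat μ)) : EuclideanSpace ℝ (Fin p))⟫ ≤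
      f y - ⟪μ, (WithLp.toLp 2 (Hy.mulVec y) : EuclideanSpace ℝ (Fin p))⟫) :
    ∀ μ, D μ ≠ ⊥ →
      ((‖yhat μ - ystar‖ ^ 2 : ℝ) : EReal) ≤ ((2 / σf : ℝ) : EReal) * (D μstar - D μ) := by
  intro μ hbot
  -- the shifted primal objective
  set φ : EuclideanSpace ℝ (Fin n) → ℝ :=
    fun y => f y - ⟪μ, (WithLp.toLp 2 (Hy.mulVec y) : EuclideanSpace ℝ (Fin p))⟫ with hφ
  have hφ_sc : StronglyConvexWith σf φ := by
    intro x y l hl0 hl1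
    have h1 := hf_sc x y l hl0 hl1
    have h2 := inner_mulVec_combo Hy μ x y l
    simp only [hφ]
    rw [h2]; linarith
  have hφ_min : ∀ y, φ (yhat μ) ≤ φ y := fun y => hyhat_min μ y
  have hsc := sc_min_bound hσ hφ_sc hφ_min ystar
  -- realConj lower bound
  set A : ℝ := realConj f (WithLp.toLp 2 (Hyᵀ.mulVec μ)) with hA
  obtain ⟨w, hw⟩ : ∃ w : EuclideanSpace ℝ (Fin n), w = WithLp.toLp 2 (Hyᵀ.mulVec μ) := ⟨_, rfl⟩
  have hAd : A = ⨆ y : EuclideanSpace ℝ (Fin n), ((⟪w, y⟫ : ℝ) - f y) := by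
    rw [hw]; rfl
  have hbdd : BddAbove (Set.range fun y : EuclideanSpace ℝ (Fin n) =>
      (⟪w, y⟫ : ℝ) - f y) := by
    refine ⟨-φ (yhat μ), ?_⟩
    rintro _ ⟨y, rfl⟩
    dsimp only
    rw [inner_transpose_mulVec Hy μ y w hw]
    have := hφ_min y
    simp only [hφ] at this ⊢
    linarith
  have hAge : (⟪μ, (WithLp.toLp 2 (Hy.mulVec (yhat μ)) : EuclideanSpace ℝ (Fin p))⟫ : ℝ)
      - f (yhat μ) ≤ A := by
    have := le_ciSup hbdd (yhat μ)
    rw [inner_transpose_mulVec Hy μ (yhat μ) w hw] at this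
    rw [hAd]
    exact this
  -- fconj g facts
  obtain ⟨wz, hwz⟩ : ∃ wz : EuclideanSpace ℝ (Fin nz), wz = WithLp.toLp 2 (Hzᵀ.mulVec μ) := ⟨_, rfl⟩
  have hGd : fconj g (WithLp.toLp 2 (Hzᵀ.mulVec μ))
      = ⨆ x : EuclideanSpace ℝ (Fin nz), (((⟪wz, x⟫ - g x : ℝ)) : EReal) := by
    rw [hwz]; rfl
  have hGle : (((⟪μ, (WithLp.toLp 2 (Hz.mulVec zstar) : EuclideanSpace ℝ (Fin p))⟫
      - g zstar : ℝ)) : EReal) ≤ fconj g (WithLp.toLp 2 (Hzᵀ.mulVec μ)) := by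
    rw [hGd]
    have := le_iSup (fun x : EuclideanSpace ℝ (Fin nz) =>
      (((⟪wz, x⟫ - g x : ℝ)) : EReal)) zstar
    rw [inner_transpose_mulVec Hz μ zstar wz hwz] at this
    exact this
  have hGbot : fconj g (WithLp.toLp 2 (Hzᵀ.mulVec μ)) ≠ ⊥ := fun h =>
    (EReal.bot_lt_coe _).not_ge (h ▸ hGle)
  have hGtop : fconj g (WithLp.toLp 2 (Hzᵀ.mulVec μ)) ≠ ⊤ := by
    intro h
    rw [hD μ, h] at hbot
    simp [EReal.sub_top] at hbot
  set G : ℝ := (fconj g (WithLp.toLp 2 (Hzᵀ.mulVec μ))).toReal with hG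
  have hGcoe : (G : EReal) = fconj g (WithLp.toLp 2 (Hzᵀ.mulVec μ)) := EReal.coe_toReal hGtop hGbot
  have hGge : ⟪μ, (WithLp.toLp 2 (Hz.mulVec zstar) : EuclideanSpace ℝ (Fin p))⟫ - g zstar ≤ G := by
    rw [← hGcoe] at hGle; exact_mod_cast hGle
  -- D μ as a real number
  have hDμ : D μ = ((-A - G + ⟪d, μ⟫ : ℝ) : EReal) := by
    rw [hD μ, ← hGcoe, ← hA]
    push_cast
    rfl
  -- inner product of d with μ
  have hdμ : (⟪d, μ⟫ : ℝ) = ⟪μ, (WithLp.toLp 2 (Hy.mulVec ystar) : EuclideanSpace ℝ (Fin p))⟫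
      + ⟪μ, (WithLp.toLp 2 (Hz.mulVec zstar) : EuclideanSpace ℝ (Fin p))⟫ := by
    rw [show d = WithLp.toLp 2 (Hy.mulVec ystar) + WithLp.toLp 2 (Hz.mulVec zstar) from by
      rw [← WithLp.toLp_add, hfeas], real_inner_comm]
    exact inner_add_right _ _ _
  -- finish
  rw [hsd, hDμ]
  have key : σf / 2 * ‖yhat μ - ystar‖ ^ 2 ≤ (f ystar + g zstar) - (-A - G + ⟪d, μ⟫) := by
    simp only [hφ] at hsc
    rw [hdμ]
    linarith
  have h2σ : (0:ℝ) < 2 / σf := by positivity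
  have hreal : ‖yhat μ - ystar‖ ^ 2 ≤ (2 / σf) * ((f ystar + g zstar) - (-A - G + ⟪d, μ⟫)) := by
    have h1 := mul_le_mul_of_nonneg_left key h2σ.le
    have h2 : (2 / σf) * (σf / 2 * ‖yhat μ - ystar‖ ^ 2) = ‖yhat μ - ystar‖ ^ 2 := by
      field_simp
    linarith
  calc ((‖yhat μ - ystar‖ ^ 2 : ℝ) : EReal)
      ≤ (((2 / σf) * ((f ystar + g zstar) - (-A - G + ⟪d, μ⟫)) : ℝ) : EReal) := by
        exact_mod_cast hreal
    _ = ((2 / σf : ℝ) : EReal) * (((f ystar + g zstar : ℝ) : EReal) - ((-A - G + ⟪d, μ⟫ : ℝ) : EReal)) := by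
        push_cast; rfl
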